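/- For every $k \in \mathbb{R}^3$ and every $R > 0$ there exist $\zeta_1, \zeta_2 \in \mathbb{C}^3$ such that $\zeta_1 \cdot \zeta_1 = 0$, $\zeta_2 \cdot \zeta_2 = 0$, $\zeta_1 + \zeta_2 = i k$, and $|\zeta_1| \ge R$, $|\zeta_2| \ge R$. -/

import Mathlib

lemma stmt_14_aux (k u v : EuclideanSpace ℝ (Fin 3)) (A B : ℝ)
    (ζ : EuclideanSpace ℂ (Fin 3))
    (hu : ∑ j, u j * u j = 1)
    (hv : ∑ j, v j * v j = 1)
    (huv : ∑ j, u j * v j = 0)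
    (hku : ∑ j, k j * u j = 0) (hkv : ∑ j, k j * v j = 0)
    (hkk : ∑ j, k j * k j = 4 * (A ^ 2 - B ^ 2))
    (hζ : ∀ j, ζ j = Complex.I * (k j : ℂ) / 2 + (A : ℂ) * (u j : ℂ)
        + Complex.I * (B : ℂ) * (v j : ℂ)) :
    (∑ j, ζ j * ζ j) = 0 ∧ |A| ≤ ‖ζ‖ := by
  have hu' : ((u 0 : ℂ) * u 0 + u 1 * u 1 + u 2 * u 2) = 1 := by
    rw [Fin.sum_univ_three] at hu; exact_mod_cast congrArg (Complex.ofReal) hu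
  have hv' : ((v 0 : ℂ) * v 0 + v 1 * v 1 + v 2 * v 2) = 1 := by
    rw [Fin.sum_univ_three] at hv; exact_mod_cast congrArg (Complex.ofReal) hv
  have huv' : ((u 0 : ℂ) * v 0 + u 1 * v 1 + u 2 * v 2) = 0 := by
    rw [Fin.sum_univ_three] at huv; exact_mod_cast congrArg (Complex.ofReal) huv
  have hku' : ((k 0 : ℂ) * u 0 + k 1 * u 1 + k 2 * u 2) = 0 := by
    rw [Fin.sum_univ_three] at hku; exact_mod_cast congrArg (Complex.ofReal) hku
  have hkv' : ((k 0 : ℂ) * v 0 + k 1 * v 1 + k 2 * v 2) = 0 := by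
    rw [Fin.sum_univ_three] at hkv; exact_mod_cast congrArg (Complex.ofReal) hkv
  have hkk' : ((k 0 : ℂ) * k 0 + k 1 * k 1 + k 2 * k 2) = 4 * ((A : ℂ) ^ 2 - (B : ℂ) ^ 2) := by
    rw [Fin.sum_univ_three] at hkk; exact_mod_cast congrArg (Complex.ofReal) hkk
  constructor
  · rw [Fin.sum_univ_three, hζ 0, hζ 1, hζ 2]
    linear_combination (-(1 : ℂ)/4) * hkk' + (A : ℂ)^2 * hu' - (B : ℂ)^2 * hv'
      + 2*Complex.I*A*B*huv' + Complex.I*A*hku' - (B : ℂ)*hkv'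
      + (((k 0 : ℂ)^2 + (k 1 : ℂ)^2 + (k 2 : ℂ)^2)/4
        + (B : ℂ)^2*((v 0 : ℂ)^2 + (v 1 : ℂ)^2 + (v 2 : ℂ)^2)
        + (B : ℂ)*((k 0 : ℂ)*(v 0 : ℂ) + (k 1 : ℂ)*(v 1 : ℂ) + (k 2 : ℂ)*(v 2 : ℂ)))
        * Complex.I_sq
  · have hre : ∀ j, (ζ j).re = A * u j := by intro j; rw [hζ j]; simp
    have hnsq : ∀ j : Fin 3, ‖ζ j‖ ^ 2 = (ζ j).re ^ 2 + (ζ j).im ^ 2 := by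
      intro j; rw [Complex.sq_norm, Complex.normSq_apply]; ring
    rw [EuclideanSpace.norm_eq]
    rw [show |A| = Real.sqrt (A ^ 2) from (Real.sqrt_sq_eq_abs A).symm]
    apply Real.sqrt_le_sqrt
    rw [Fin.sum_univ_three]
    have hu3 := hu
    rw [Fin.sum_univ_three] at hu3
    have hj : ∀ j : Fin 3, A ^ 2 * (u j * u j) ≤ ‖ζ j‖ ^ 2 := by
      intro j; rw [hnsq j, hre j]; nlinarith [sq_nonneg (ζ j).im]
    have key : A ^ 2 * (u 0 * u 0 + u 1 * u 1 + u 2 * u 2) = A ^ 2 := by rw [hu3]; ring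
    linarith [hj 0, hj 1, hj 2]

theorem stmt_14 (k : EuclideanSpace ℝ (Fin 3)) (R : ℝ) (hR : 0 < R) :
    ∃ ζ₁ ζ₂ : EuclideanSpace ℂ (Fin 3),
      (∑ j, ζ₁ j * ζ₁ j) = 0 ∧ (∑ j, ζ₂ j * ζ₂ j) = 0 ∧
      (∀ j, ζ₁ j + ζ₂ j = Complex.I * (k j : ℂ)) ∧ R ≤ ‖ζ₁‖ ∧ R ≤ ‖ζ₂‖ := by
  -- an orthonormal pair orthogonal to k
  have hKdim : 2 ≤ Module.finrank ℝ ((ℝ ∙ k)ᗮ) := by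
    have h := (ℝ ∙ k).finrank_add_finrank_orthogonal
    rw [finrank_euclideanSpace_fin] at h
    have h1 : Module.finrank ℝ (ℝ ∙ k) ≤ 1 := by
      rcases eq_or_ne k 0 with rfl | hk
      · rw [Submodule.span_zero_singleton]; simp
      · rw [finrank_span_singleton hk]
    omega
  let b := stdOrthonormalBasis ℝ ((ℝ ∙ k)ᗮ : Submodule ℝ (EuclideanSpace ℝ (Fin 3)))
  set u : EuclideanSpace ℝ (Fin 3) := ↑(b ⟨0, by omega⟩) with hu_def
  set v : EuclideanSpace ℝ (Fin 3) := ↑(b ⟨1, by omega⟩) with hv_def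
  have hinner : ∀ x y : EuclideanSpace ℝ (Fin 3), (inner ℝ x y : ℝ) = ∑ j, x j * y j := by
    intro x y; simp [PiLp.inner_apply, RCLike.inner_apply, conj_trivial, mul_comm]
  have hbo := b.orthonormal
  have hu : ∑ j, u j * u j = 1 := by
    rw [← hinner, real_inner_self_eq_norm_sq, hu_def,
      show ‖(↑(b ⟨0, by omega⟩) : EuclideanSpace ℝ (Fin 3))‖ = ‖b ⟨0, by omega⟩‖ from rfl,
      hbo.1 ⟨0, by omega⟩]
    norm_num
  have hv : ∑ j, v j * v j = 1 := by
    rw [← hinner, real_inner_self_eq_norm_sq, hv_def,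
      show ‖(↑(b ⟨1, by omega⟩) : EuclideanSpace ℝ (Fin 3))‖ = ‖b ⟨1, by omega⟩‖ from rfl,
      hbo.1 ⟨1, by omega⟩]
    norm_num
  have huv : ∑ j, u j * v j = 0 := by
    rw [← hinner]
    exact hbo.2 (i := ⟨0, by omega⟩) (j := ⟨1, by omega⟩) (by simp)
  have hku : ∑ j, k j * u j = 0 := by
    rw [← hinner]
    exact (b ⟨0, by omega⟩).2 k (Submodule.mem_span_singleton_self k)
  have hkv : ∑ j, k j * v j = 0 := by
    rw [← hinner]
    exact (b ⟨1, by omega⟩).2 k (Submodule.mem_span_singleton_self k)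
  -- parameters
  set B : ℝ := R + ‖k‖ with hB_def
  set A : ℝ := Real.sqrt (B ^ 2 + ‖k‖ ^ 2 / 4) with hA_def
  have hA2 : A ^ 2 = B ^ 2 + ‖k‖ ^ 2 / 4 := Real.sq_sqrt (by positivity)
  have hkk : ∑ j, k j * k j = 4 * (A ^ 2 - B ^ 2) := by
    rw [← hinner, real_inner_self_eq_norm_sq, hA2]; ring
  have hRA : R ≤ |A| := by
    rw [abs_of_nonneg (Real.sqrt_nonneg _)]
    nlinarith [norm_nonneg k, Real.sqrt_nonneg (B ^ 2 + ‖k‖ ^ 2 / 4)]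
  set ζ₁ : EuclideanSpace ℂ (Fin 3) := WithLp.toLp 2 fun j => Complex.I * (k j : ℂ) / 2
    + (A : ℂ) * (u j : ℂ) + Complex.I * (B : ℂ) * (v j : ℂ) with hζ₁
  set ζ₂ : EuclideanSpace ℂ (Fin 3) := WithLp.toLp 2 fun j => Complex.I * (k j : ℂ) / 2
    + ((-A : ℝ) : ℂ) * (u j : ℂ) + Complex.I * ((-B : ℝ) : ℂ) * (v j : ℂ) with hζ₂
  have h1 := stmt_14_aux k u v A B ζ₁ hu hv huv hku hkv hkk (fun j => rfl)
  have h2 := stmt_14_aux k u v (-A) (-B) ζ₂ hu hv huv hku hkv (by rw [hkk]; ring)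
    (fun j => rfl)
  refine ⟨ζ₁, ζ₂, h1.1, h2.1, ?_, le_trans hRA h1.2, le_trans (by rwa [← abs_neg] at hRA) h2.2⟩
  intro j
  show (Complex.I * (k j : ℂ) / 2 + (A : ℂ) * (u j : ℂ) + Complex.I * (B : ℂ) * (v j : ℂ))
    + (Complex.I * (k j : ℂ) / 2 + ((-A : ℝ) : ℂ) * (u j : ℂ)
      + Complex.I * ((-B : ℝ) : ℂ) * (v j : ℂ)) = Complex.I * (k j : ℂ)
  push_cast
  ring
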